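/- arXiv:1409.0467 — 2 statements merged into one kernel-verified Lean document; each statement's English description precedes it below -/
import Mathlib

section
/- Let (R, m) be a Noetherian local ring of prime characteristic p and let I ⊆ J be ideals with I m-primary. Then for every q = p^e, λ(R/I^[q]) ≤ λ(J/I)·λ(R/m^[q]) + λ(R/J^[q]). -/
open IsLocalRing

/-- The `q`-th Frobenius power `I^[q]`: the ideal generated by `q`-th powers of elements of `I`. -/
noncomputable def frobPow {R : Type*} [CommRing R] (I : Ideal R) (q : ℕ) : Ideal R :=
  Ideal.span ((fun x => x ^ q) '' (I : Set R))

/-- The length of an `R`-module, as a natural number. -/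
noncomputable def len (R M : Type*) [Ring R] [AddCommGroup M] [Module R M] : ℕ :=
  ((Order.krullDim (Submodule R M)).unbotD 0).toNat

/-- `I` is `m`-primary: a proper ideal containing a power of the maximal ideal. -/
def IsMPrimary {R : Type*} [CommRing R] [IsLocalRing R] (I : Ideal R) : Prop :=
  I ≠ ⊤ ∧ ∃ n : ℕ, maximalIdeal R ^ n ≤ I

open Order
section
variable {α β : Type*} [Preorder α] [Preorder β]

lemma aux_prod_series (p : LTSeries (α × β)) :
    (p.length : ℕ∞) ≤ height p.last.1 + height p.last.2 := by
  induction' hn : p.length with n ih generalizing p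
  · simp
  ·
    have hlt : p.eraseLast.last < p.last := by
      have := p.eraseLast_last_rel_last (by omega)
      exact this
    have hlen : p.eraseLast.length = n := by simp [RelSeries.eraseLast, hn]
    have H := ih p.eraseLast hlen
    set a := p.eraseLast.last with ha
    set b := p.last with hb
    rcases Prod.lt_iff.mp hlt with ⟨h1, h2⟩ | ⟨h1, h2⟩
    · by_cases hfin : height a.1 = ⊤
      · have : height b.1 = ⊤ := top_le_iff.mp (hfin ▸ height_mono h1.le)
        simp [this]
      · have hs : height a.1 < height b.1 :=
          height_strictMono h1 (lt_top_iff_ne_top.mpr hfin)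
        have : height a.1 + 1 ≤ height b.1 := Order.add_one_le_of_lt hs
        calc ((n:ℕ∞) + 1) ≤ (height a.1 + height a.2) + 1 := by gcongr
          _ = (height a.1 + 1) + height a.2 := by ring
          _ ≤ height b.1 + height b.2 := by gcongr
    · by_cases hfin : height a.2 = ⊤
      · have : height b.2 = ⊤ := top_le_iff.mp (hfin ▸ height_mono h2.le)
        simp [this]
      · have hs : height a.2 < height b.2 :=
          height_strictMono h2 (lt_top_iff_ne_top.mpr hfin)
        have : height a.2 + 1 ≤ height b.2 := Order.add_one_le_of_lt hs
        calc ((n:ℕ∞) + 1) ≤ (height a.1 + height a.2) + 1 := by gcongr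
          _ = height a.1 + (height a.2 + 1) := by ring
          _ ≤ height b.1 + height b.2 := by gcongr

lemma aux_krullDim_prod [Nonempty α] [Nonempty β] :
    krullDim (α × β) ≤ krullDim α + krullDim β := by
  have h1 : krullDim (α × β) = ⨆ (p : LTSeries (α × β)), ((p.length : ℕ∞) : WithBot ℕ∞) := by
    rw [krullDim_eq_iSup_length]; rw [WithBot.coe_iSup (OrderTop.bddAbove _)]
  rw [h1]
  apply iSup_le
  intro p
  calc ((p.length : ℕ∞) : WithBot ℕ∞) ≤ ((height p.last.1 + height p.last.2 : ℕ∞) : WithBot ℕ∞) := by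
        exact_mod_cast aux_prod_series p
    _ = (height p.last.1 : WithBot ℕ∞) + (height p.last.2 : WithBot ℕ∞) := by
        push_cast; rfl
    _ ≤ krullDim α + krullDim β := add_le_add (height_le_krullDim _) (height_le_krullDim _)
end

open Order
section
variable {α : Type*}

lemma aux_krullDim_le_of_length_le [Preorder α] [Nonempty α] {n : ℕ∞}
    (h : ∀ p : LTSeries α, (p.length : ℕ∞) ≤ n) : krullDim α ≤ (n : WithBot ℕ∞) := by
  have h1 : krullDim α = ⨆ (p : LTSeries α), ((p.length : ℕ∞) : WithBot ℕ∞) := by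
    rw [krullDim_eq_iSup_length]; rw [WithBot.coe_iSup (OrderTop.bddAbove _)]
  rw [h1]
  exact iSup_le fun p => by exact_mod_cast h p

variable [Lattice α] [IsModularLattice α]

lemma aux_Icc_split {a b c : α} (hab : a ≤ b) (hbc : b ≤ c) :
    krullDim (Set.Icc a c) ≤ krullDim (Set.Icc a b) + krullDim (Set.Icc b c) := by
  have n1 : Nonempty (Set.Icc a b) := ⟨⟨a, le_refl a, hab⟩⟩
  have n2 : Nonempty (Set.Icc b c) := ⟨⟨b, le_refl b, hbc⟩⟩
  refine le_trans (krullDim_le_of_strictMono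
    (fun x : Set.Icc a c =>
      ((⟨x.1 ⊓ b, le_inf x.2.1 hab, inf_le_right⟩ : Set.Icc a b),
       (⟨x.1 ⊔ b, le_sup_right, sup_le x.2.2 hbc⟩ : Set.Icc b c))) ?_) aux_krullDim_prod
  intro x y hxy
  have hlt : x.1 < y.1 := hxy
  have H := strictMono_inf_prod_sup (z := b) hlt
  rw [Prod.lt_iff] at H ⊢
  rcases H with ⟨h1, h2⟩ | ⟨h1, h2⟩
  · exact Or.inl ⟨Subtype.mk_lt_mk.mpr h1, Subtype.mk_le_mk.mpr h2⟩
  · exact Or.inr ⟨Subtype.mk_le_mk.mpr h1, Subtype.mk_lt_mk.mpr h2⟩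
end

section
open Order Submodule
variable {R M : Type*} [CommRing R] [AddCommGroup M] [Module R M]

lemma aux_quot_dim (N : Submodule R M) :
    krullDim (Submodule R (M ⧸ N)) = krullDim (Set.Icc N (⊤ : Submodule R M)) := by
  apply le_antisymm
  · refine krullDim_le_of_strictMono
      (fun V => (⟨Submodule.comap N.mkQ V, ?_, le_top⟩ : Set.Icc N ⊤)) ?_
    · conv_lhs => rw [← Submodule.ker_mkQ N]
      exact Submodule.comap_mono bot_le
    · apply Monotone.strictMono_of_injective
      · intro V V' h; exact Subtype.mk_le_mk.mpr (Submodule.comap_mono h)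
      · intro V V' h
        exact Submodule.comap_injective_of_surjective (Submodule.mkQ_surjective N)
          (congrArg Subtype.val h)
  · refine krullDim_le_of_strictMono (fun W => Submodule.map N.mkQ W.1) ?_
    apply Monotone.strictMono_of_injective
    · intro W W' h; exact Submodule.map_mono h
    · intro W W' h
      dsimp only at h
      have h2 := congrArg (Submodule.comap N.mkQ) h
      rw [Submodule.comap_map_mkQ, Submodule.comap_map_mkQ,
        sup_eq_right.mpr W.2.1, sup_eq_right.mpr W'.2.1] at h2
      exact Subtype.ext h2

lemma aux_sub_dim {I J : Ideal R} (hIJ : I ≤ J) :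
    krullDim (Set.Icc (Submodule.comap J.subtype I) (⊤ : Submodule R ↥J))
      = krullDim (Set.Icc I J) := by
  apply le_antisymm
  · refine krullDim_le_of_strictMono
      (fun W => (⟨Submodule.map J.subtype W.1, ?_, Submodule.map_subtype_le J W.1⟩ :
        Set.Icc I J)) ?_
    · calc I = J ⊓ I := (inf_eq_right.mpr hIJ).symm
        _ = Submodule.map J.subtype (Submodule.comap J.subtype I) :=
            (Submodule.map_comap_subtype J I).symm
        _ ≤ Submodule.map J.subtype W.1 := Submodule.map_mono W.2.1
    · apply Monotone.strictMono_of_injective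
      · intro W W' h; exact Subtype.mk_le_mk.mpr (Submodule.map_mono h)
      · intro W W' h
        exact Subtype.ext (Submodule.map_injective_of_injective J.injective_subtype
          (congrArg Subtype.val h))
  · refine krullDim_le_of_strictMono
      (fun V => (⟨Submodule.comap J.subtype V.1, Submodule.comap_mono V.2.1, le_top⟩ :
        Set.Icc (Submodule.comap J.subtype I) ⊤)) ?_
    apply Monotone.strictMono_of_injective
    · intro V V' h; exact Subtype.mk_le_mk.mpr (Submodule.comap_mono h)
    · intro V V' h
      have h2 := congrArg (Submodule.map J.subtype) (congrArg Subtype.val h)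
      rw [Submodule.map_comap_subtype, Submodule.map_comap_subtype,
        inf_eq_right.mpr V.2.2, inf_eq_right.mpr V'.2.2] at h2
      exact Subtype.ext h2

lemma aux_colon {A C : Ideal R} {x : R} (hA : C * Ideal.span {x} ≤ A) :
    krullDim (Set.Icc A (A ⊔ Ideal.span {x})) ≤ krullDim (Set.Icc C (⊤ : Ideal R)) := by
  have key : ∀ W W' : Set.Icc A (A ⊔ Ideal.span {x}),
      Submodule.comap (LinearMap.toSpanSingleton R R x) W.1 ≤
      Submodule.comap (LinearMap.toSpanSingleton R R x) W'.1 → W.1 ≤ W'.1 := by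
    rintro ⟨W, hAW, hWB⟩ ⟨W', hAW', _⟩ hc w hw
    rcases Submodule.mem_sup.mp (hWB hw) with ⟨a, ha, y, hy, rfl⟩
    rcases Ideal.mem_span_singleton'.mp hy with ⟨r, rfl⟩
    have hrx : r * x ∈ W := by
      have : a + r * x - a ∈ W := Submodule.sub_mem _ hw (hAW ha)
      simpa using this
    have hr : r ∈ Submodule.comap (LinearMap.toSpanSingleton R R x) W := by
      simpa [LinearMap.toSpanSingleton_apply, smul_eq_mul] using hrx
    have := hc hr
    simp only [Submodule.mem_comap, LinearMap.toSpanSingleton_apply, smul_eq_mul] at this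
    exact Submodule.add_mem _ (hAW' ha) this
  refine krullDim_le_of_strictMono
    (fun W => (⟨Submodule.comap (LinearMap.toSpanSingleton R R x) W.1, ?_, le_top⟩ :
      Set.Icc C ⊤)) ?_
  · intro c hc
    have : c * x ∈ A := hA (Ideal.mul_mem_mul hc (Ideal.mem_span_singleton_self x))
    simpa [LinearMap.toSpanSingleton_apply, smul_eq_mul] using W.2.1 this
  · intro W W' hlt
    refine Subtype.mk_lt_mk.mpr (lt_of_le_of_ne (Submodule.comap_mono hlt.le) ?_)
    intro heq
    exact absurd (le_antisymm hlt.le (key W' W heq.ge)) hlt.ne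
end

section
open Order IsLocalRing
variable {R : Type*} [CommRing R] [IsLocalRing R]

lemma aux_Icc_self {g : Type*} [PartialOrder g] (a : g) :
    krullDim (Set.Icc a a) ≤ ((0 : ℕ∞) : WithBot ℕ∞) := by
  have : Subsingleton (Set.Icc a a) :=
    ⟨fun u v => Subtype.ext ((le_antisymm u.2.2 u.2.1).trans (le_antisymm v.2.1 v.2.2))⟩
  simpa using krullDim_nonpos_of_subsingleton (α := Set.Icc a a)

lemma aux_max_interval :
    krullDim (Set.Icc (maximalIdeal R) (⊤ : Ideal R)) ≤ ((1 : ℕ∞) : WithBot ℕ∞) := by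
  have : Nonempty (Set.Icc (maximalIdeal R) (⊤ : Ideal R)) := ⟨⟨maximalIdeal R, le_rfl, le_top⟩⟩
  apply aux_krullDim_le_of_length_le
  intro p
  by_contra hcon
  push_neg at hcon
  have h2 : 2 ≤ p.length := by
    have : 1 < p.length := by exact_mod_cast hcon
    omega
  have h01 : p ⟨0, by omega⟩ < p ⟨1, by omega⟩ := p.strictMono (by simp [Fin.lt_def])
  have h12 : p ⟨1, by omega⟩ < p ⟨2, by omega⟩ := p.strictMono (by simp [Fin.lt_def])
  have hne : (p ⟨1, by omega⟩).1 ≠ ⊤ :=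
    ne_top_of_lt (show (p ⟨1, by omega⟩).1 < (p ⟨2, by omega⟩).1 from h12)
  have heq : maximalIdeal R = (p ⟨1, by omega⟩).1 :=
    (IsLocalRing.maximalIdeal.isMaximal R).eq_of_le hne (p ⟨1, by omega⟩).2.1
  have hval : (p ⟨0, by omega⟩).1 < (p ⟨1, by omega⟩).1 := h01
  rw [← heq] at hval
  exact ((p ⟨0, by omega⟩).2.1).not_gt hval

lemma aux_step_dim {A : Ideal R} {x : R} (h : maximalIdeal R * Ideal.span {x} ≤ A) :
    krullDim (Set.Icc A (A ⊔ Ideal.span {x})) ≤ ((1 : ℕ∞) : WithBot ℕ∞) :=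
  (aux_colon h).trans aux_max_interval

lemma aux_fg_interval (s : Finset R) :
    ∀ A B : Ideal R, B = A ⊔ Ideal.span (s : Set R) →
    (∀ x ∈ s, maximalIdeal R * Ideal.span {x} ≤ A) →
    krullDim (Set.Icc A B) ≤ ((s.card : ℕ∞) : WithBot ℕ∞) := by
  classical
  induction s using Finset.induction with
  | empty =>
    intro A B hB _
    rw [Finset.coe_empty, Ideal.span_empty, sup_bot_eq] at hB
    rw [hB]
    simpa using aux_Icc_self A
  | @insert x s hx ih =>
    intro A B hB hgen
    rw [Finset.coe_insert, Ideal.span_insert] at hB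
    set mid := A ⊔ Ideal.span (s : Set R) with hmid
    have hB' : B = mid ⊔ Ideal.span {x} := by
      rw [hB, hmid]; ac_rfl
    have hAmid : A ≤ mid := le_sup_left
    have hmidB : mid ≤ B := by rw [hB']; exact le_sup_left
    calc krullDim (Set.Icc A B)
        ≤ krullDim (Set.Icc A mid) + krullDim (Set.Icc mid B) := aux_Icc_split hAmid hmidB
      _ ≤ ((s.card : ℕ∞) : WithBot ℕ∞) + ((1 : ℕ∞) : WithBot ℕ∞) := by
          apply add_le_add
          · exact ih A mid rfl (fun y hy => hgen y (Finset.mem_insert_of_mem hy))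
          · rw [hB']
            exact aux_step_dim ((hgen x (Finset.mem_insert_self x s)).trans hAmid)
      _ = (((insert x s).card : ℕ∞) : WithBot ℕ∞) := by
          rw [Finset.card_insert_of_notMem hx]; push_cast; ring

variable [IsNoetherianRing R]

lemma aux_pow_dim : ∀ n : ℕ,
    ∃ k : ℕ, krullDim (Set.Icc ((maximalIdeal R) ^ n) (⊤ : Ideal R)) ≤ ((k : ℕ∞) : WithBot ℕ∞) := by
  intro n
  induction n with
  | zero =>
    refine ⟨0, ?_⟩
    rw [pow_zero, Ideal.one_eq_top]
    simpa using aux_Icc_self (⊤ : Ideal R)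
  | succ n ih =>
    obtain ⟨k, hk⟩ := ih
    obtain ⟨s, hs⟩ := (IsNoetherian.noetherian ((maximalIdeal R) ^ n) : _)
    refine ⟨s.card + 1 + k, ?_⟩
    have hle : (maximalIdeal R) ^ (n + 1) ≤ (maximalIdeal R) ^ n :=
      Ideal.pow_le_pow_right (by omega)
    have hsplit := aux_Icc_split (a := (maximalIdeal R) ^ (n+1)) (b := (maximalIdeal R) ^ n)
      (c := (⊤ : Ideal R)) hle le_top
    have hfg : krullDim (Set.Icc ((maximalIdeal R) ^ (n+1)) ((maximalIdeal R) ^ n))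
        ≤ ((s.card : ℕ∞) : WithBot ℕ∞) := by
      apply aux_fg_interval s
      · rw [show Ideal.span ((s : Set R)) = maximalIdeal R ^ n from hs, sup_eq_right.mpr hle]
      · intro y hy
        have h1 : Ideal.span {y} ≤ (maximalIdeal R) ^ n := by
          rw [← hs]; exact Ideal.span_mono (by simpa using hy)
        calc maximalIdeal R * Ideal.span {y} ≤ maximalIdeal R * (maximalIdeal R) ^ n :=
              Ideal.mul_mono_right h1
          _ = (maximalIdeal R) ^ (n+1) := by rw [pow_succ, mul_comm]
    calc krullDim (Set.Icc ((maximalIdeal R) ^ (n+1)) (⊤ : Ideal R))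
        ≤ _ + _ := hsplit
      _ ≤ ((s.card : ℕ∞) : WithBot ℕ∞) + ((k : ℕ∞) : WithBot ℕ∞) := add_le_add hfg hk
      _ ≤ (((s.card + 1 + k : ℕ) : ℕ∞) : WithBot ℕ∞) := by
          push_cast
          exact_mod_cast (show ((s.card + k : ℕ) : ℕ∞) ≤ ((s.card + 1 + k : ℕ) : ℕ∞) by
            exact_mod_cast (by omega : s.card + k ≤ s.card + 1 + k))

lemma aux_primary_dim {A : Ideal R} {n : ℕ} (h : (maximalIdeal R) ^ n ≤ A) :
    ∃ k : ℕ, krullDim (Set.Icc A (⊤ : Ideal R)) ≤ ((k : ℕ∞) : WithBot ℕ∞) := by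
  obtain ⟨k, hk⟩ := aux_pow_dim (R := R) n
  refine ⟨k, le_trans (krullDim_le_of_strictMono
    (fun W => (⟨W.1, h.trans W.2.1, le_top⟩ : Set.Icc ((maximalIdeal R) ^ n) ⊤)) ?_) hk⟩
  intro a b hab
  exact Subtype.mk_lt_mk.mpr hab
end

section
open Order IsLocalRing
variable {R : Type*} [CommRing R]

section frob
variable (p : ℕ) [Fact p.Prime] [CharP R p]

lemma aux_frobPow_eq_map (I : Ideal R) (e : ℕ) :
    frobPow I (p ^ e) = Ideal.map (iterateFrobenius R p e) I := by
  unfold frobPow Ideal.map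
  congr 1

lemma aux_frobPow_mono {A B : Ideal R} (h : A ≤ B) (e : ℕ) :
    frobPow A (p ^ e) ≤ frobPow B (p ^ e) := by
  rw [aux_frobPow_eq_map, aux_frobPow_eq_map]
  exact Ideal.map_mono h

lemma aux_frobPow_sup_span (K : Ideal R) (x : R) (e : ℕ) :
    frobPow (K ⊔ Ideal.span {x}) (p ^ e) = frobPow K (p ^ e) ⊔ Ideal.span {x ^ p ^ e} := by
  rw [aux_frobPow_eq_map, aux_frobPow_eq_map, Ideal.map_sup, Ideal.map_span,
    Set.image_singleton, iterateFrobenius_def]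

lemma aux_frobPow_mul (A B C : Ideal R) (h : A * B ≤ C) (e : ℕ) :
    frobPow A (p ^ e) * frobPow B (p ^ e) ≤ frobPow C (p ^ e) := by
  rw [aux_frobPow_eq_map, aux_frobPow_eq_map, aux_frobPow_eq_map, ← Ideal.map_mul]
  exact Ideal.map_mono h

lemma aux_mem_frobPow {A : Ideal R} {x : R} (hx : x ∈ A) (e : ℕ) :
    x ^ p ^ e ∈ frobPow A (p ^ e) := by
  rw [aux_frobPow_eq_map]
  exact (iterateFrobenius_def p e x) ▸ Ideal.mem_map_of_mem _ hx
end frob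

lemma aux_nakayama [IsLocalRing R] [IsNoetherianRing R] {K J : Ideal R}
    (hKJ : K ≤ J) (hsup : K ⊔ maximalIdeal R • J = J) : J ≤ K := by
  set N : Submodule R (R ⧸ K) := Submodule.map K.mkQ J with hN
  have hfg : N.FG := (IsNoetherian.noetherian J).map _
  have hle : N ≤ maximalIdeal R • N := by
    have h1 : Submodule.map K.mkQ J = Submodule.map K.mkQ (K ⊔ maximalIdeal R • J) := by
      rw [hsup]
    rw [Submodule.map_sup, Submodule.map_smul''] at h1
    rw [Submodule.mkQ_map_self, bot_sup_eq] at h1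
    exact le_of_eq h1
  have hjac : maximalIdeal R ≤ (⊥ : Ideal R).jacobson := by
    rw [IsLocalRing.jacobson_eq_maximalIdeal (⊥ : Ideal R) bot_ne_top]
  have hbot : N = ⊥ := Submodule.eq_bot_of_le_smul_of_le_jacobson_bot _ N hfg hle hjac
  intro y hy
  have : K.mkQ y ∈ N := Submodule.mem_map_of_mem hy
  rw [hbot, Submodule.mem_bot] at this
  rwa [← Submodule.Quotient.mk_eq_zero K, ← Submodule.mkQ_apply]
end

section core
open Order IsLocalRing
variable {R : Type*} [CommRing R] [IsLocalRing R] [IsNoetherianRing R]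
variable (p : ℕ) [Fact p.Prime] [CharP R p]

lemma aux_core (e : ℕ) (c : ℕ)
    (hc : krullDim (Set.Icc (frobPow (maximalIdeal R) (p ^ e)) (⊤ : Ideal R))
      ≤ ((c : ℕ∞) : WithBot ℕ∞)) :
    ∀ n : ℕ, ∀ I J : Ideal R, I ≤ J →
      krullDim (Set.Icc I J) ≤ ((n : ℕ∞) : WithBot ℕ∞) →
      ∀ b : ℕ, krullDim (Set.Icc (frobPow J (p ^ e)) (⊤ : Ideal R)) ≤ ((b : ℕ∞) : WithBot ℕ∞) →
      krullDim (Set.Icc (frobPow I (p ^ e)) (⊤ : Ideal R))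
        ≤ (((n * c + b : ℕ) : ℕ∞) : WithBot ℕ∞) := by
  intro n
  induction n with
  | zero =>
    intro I J hIJ hdim b hb
    have hIJ' : I = J := by
      by_contra hne
      have hlt : I < J := lt_of_le_of_ne hIJ hne
      have h1 : (1 : WithBot ℕ∞) ≤ krullDim (Set.Icc I J) := by
        have := LTSeries.length_le_krullDim
          (RelSeries.snoc (RelSeries.singleton _ (⟨I, le_rfl, hIJ⟩ : Set.Icc I J))
            ⟨J, hIJ, le_rfl⟩ (by exact (Subtype.mk_lt_mk.mpr hlt : (⟨I, le_rfl, hIJ⟩ : Set.Icc I J) < ⟨J, hIJ, le_rfl⟩)))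
        simpa [RelSeries.snoc, RelSeries.append] using this
      have h0 : (1 : WithBot ℕ∞) ≤ ((0 : ℕ∞) : WithBot ℕ∞) :=
        le_trans h1 (le_trans hdim (by norm_num))
      norm_num at h0
    subst hIJ'
    simpa using hb
  | succ n ih =>
    intro I J hIJ hdim b hb
    by_cases hne : I = J
    · subst hne
      refine le_trans hb ?_
      have : b ≤ (n + 1) * c + b := Nat.le_add_left b _
      exact_mod_cast this
    · have hlt : I < J := lt_of_le_of_ne hIJ hne
      obtain ⟨K, ⟨hIK, hKJ⟩, hmax⟩ :
          ∃ K ∈ {W : Ideal R | I ≤ W ∧ W < J}, ∀ W ∈ {W : Ideal R | I ≤ W ∧ W < J}, ¬K < W :=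
        set_has_maximal_iff_noetherian.mpr inferInstance _ ⟨I, le_rfl, hlt⟩
      have hmJ : maximalIdeal R • J ≤ K := by
        have hWle : K ⊔ maximalIdeal R • J ≤ J := sup_le hKJ.le Submodule.smul_le_right
        rcases lt_or_eq_of_le hWle with hWlt | hWeq
        · have hnlt := hmax _ ⟨hIK.trans le_sup_left, hWlt⟩
          have heq : K ⊔ maximalIdeal R • J = K := by
            by_contra hne2
            exact hnlt (lt_of_le_of_ne le_sup_left fun h => hne2 h.symm)
          exact le_trans le_sup_right heq.le
        · exact absurd (aux_nakayama hKJ.le hWeq) (LT.lt.not_ge hKJ)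
      obtain ⟨x, hxJ, hxK⟩ := SetLike.exists_of_lt hKJ
      have hJx : J = K ⊔ Ideal.span {x} := by
        have hle2 : K ⊔ Ideal.span {x} ≤ J :=
          sup_le hKJ.le ((Ideal.span_singleton_le_iff_mem _).mpr hxJ)
        rcases lt_or_eq_of_le hle2 with hlt2 | heq2
        · refine absurd (hmax _ ⟨hIK.trans le_sup_left, hlt2⟩) (not_not.mpr ?_)
          refine lt_of_le_of_ne le_sup_left fun h => hxK ?_
          rw [h]
          exact Submodule.mem_sup_right (Ideal.subset_span rfl)
        · exact heq2.symm
      have hNK : Nonempty (Set.Icc I K) := ⟨⟨I, le_rfl, hIK⟩⟩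
      have hdimK : krullDim (Set.Icc I K) ≤ ((n : ℕ∞) : WithBot ℕ∞) := by
        apply aux_krullDim_le_of_length_le
        intro q
        have incl : StrictMono
            (fun W : Set.Icc I K => (⟨W.1, W.2.1, W.2.2.trans hKJ.le⟩ : Set.Icc I J)) :=
          fun a b hab => Subtype.mk_lt_mk.mpr hab
        have hrel : (q.map _ incl).last < (⟨J, hIJ, le_rfl⟩ : Set.Icc I J) := by
          rw [LTSeries.last_map]
          exact Subtype.mk_lt_mk.mpr (lt_of_le_of_lt q.last.2.2 hKJ)
        have hlen := LTSeries.length_le_krullDim (RelSeries.snoc (q.map _ incl) _ hrel)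
        have hlen2 : (RelSeries.snoc (q.map _ incl) (⟨J, hIJ, le_rfl⟩ : Set.Icc I J) hrel).length
            = q.length + 1 := rfl
        rw [hlen2] at hlen
        have : ((q.length + 1 : ℕ) : ℕ∞) ≤ ((n + 1 : ℕ) : ℕ∞) := by
          have h3 := le_trans hlen hdim
          exact_mod_cast h3
        have : q.length + 1 ≤ n + 1 := by exact_mod_cast this
        exact_mod_cast Nat.le_of_succ_le_succ this
      have hmulx : maximalIdeal R * Ideal.span {x} ≤ K := by
        calc maximalIdeal R * Ideal.span {x} ≤ maximalIdeal R * J :=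
              Ideal.mul_mono_right ((Ideal.span_singleton_le_iff_mem _).mpr hxJ)
          _ = maximalIdeal R • J := (Ideal.smul_eq_mul _ _).symm
          _ ≤ K := hmJ
      have hcolon : frobPow (maximalIdeal R) (p ^ e) * Ideal.span {x ^ p ^ e}
          ≤ frobPow K (p ^ e) := by
        refine le_trans (Ideal.mul_mono_right ?_) (aux_frobPow_mul p _ _ _ hmulx e)
        exact (Ideal.span_singleton_le_iff_mem _).mpr
          (aux_mem_frobPow p (Ideal.mem_span_singleton_self x) e)
      have hfrobJ : frobPow J (p ^ e) = frobPow K (p ^ e) ⊔ Ideal.span {x ^ p ^ e} := by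
        rw [hJx, aux_frobPow_sup_span]
      have d1 : krullDim (Set.Icc (frobPow K (p ^ e)) (frobPow J (p ^ e)))
          ≤ ((c : ℕ∞) : WithBot ℕ∞) := by
        rw [hfrobJ]
        exact le_trans (aux_colon hcolon) hc
      have d2 : krullDim (Set.Icc (frobPow K (p ^ e)) (⊤ : Ideal R))
          ≤ (((c + b : ℕ) : ℕ∞) : WithBot ℕ∞) := by
        calc krullDim (Set.Icc (frobPow K (p ^ e)) (⊤ : Ideal R))
            ≤ krullDim (Set.Icc (frobPow K (p ^ e)) (frobPow J (p ^ e)))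
              + krullDim (Set.Icc (frobPow J (p ^ e)) (⊤ : Ideal R)) :=
              aux_Icc_split (aux_frobPow_mono p hKJ.le e) le_top
          _ ≤ ((c : ℕ∞) : WithBot ℕ∞) + ((b : ℕ∞) : WithBot ℕ∞) := add_le_add d1 hb
          _ = (((c + b : ℕ) : ℕ∞) : WithBot ℕ∞) := by push_cast; ring
      have := ih I K hIK hdimK (c + b) d2
      have harith : n * c + (c + b) = (n + 1) * c + b := by ring
      rwa [harith] at this
end core

section final
open Order IsLocalRing

lemma aux_toNat {k : ℕ} {d : WithBot ℕ∞} (h0 : 0 ≤ d) (hk : d ≤ ((k : ℕ∞) : WithBot ℕ∞)) :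
    d = (((d.unbotD 0).toNat : ℕ∞) : WithBot ℕ∞) := by
  induction d using WithBot.recBotCoe with
  | bot => simp at h0
  | coe e =>
    induction e using WithTop.recTopCoe with
    | top => exact absurd (WithBot.coe_le_coe.mp hk) (not_le.mpr (ENat.coe_lt_top k))
    | coe m =>
      change ((m : ℕ∞) : WithBot ℕ∞) = (((WithBot.unbotD 0 ((m : ℕ∞) : WithBot ℕ∞)).toNat : ℕ∞) : WithBot ℕ∞)
      rw [WithBot.unbotD_coe]
      norm_cast

variable {R : Type*} [CommRing R]

lemma aux_len_quot (A : Ideal R) {k : ℕ}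
    (hk : krullDim (Set.Icc A (⊤ : Ideal R)) ≤ ((k : ℕ∞) : WithBot ℕ∞)) :
    krullDim (Set.Icc A (⊤ : Ideal R)) = ((len R (R ⧸ A) : ℕ∞) : WithBot ℕ∞) := by
  have hne : Nonempty (Set.Icc A (⊤ : Ideal R)) := ⟨⟨A, le_rfl, le_top⟩⟩
  unfold len
  rw [aux_quot_dim A]
  exact aux_toNat krullDim_nonneg hk

lemma aux_len_sub {I J : Ideal R} (hIJ : I ≤ J) {k : ℕ}
    (hk : krullDim (Set.Icc I J) ≤ ((k : ℕ∞) : WithBot ℕ∞)) :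
    krullDim (Set.Icc I J)
      = ((len R (↥J ⧸ Submodule.comap J.subtype I) : ℕ∞) : WithBot ℕ∞) := by
  have hne : Nonempty (Set.Icc I J) := ⟨⟨I, le_rfl, hIJ⟩⟩
  unfold len
  rw [aux_quot_dim (Submodule.comap J.subtype I), aux_sub_dim hIJ]
  exact aux_toNat krullDim_nonneg hk

variable [IsLocalRing R] [IsNoetherianRing R] (p : ℕ) [Fact p.Prime] [CharP R p]

lemma aux_frob_primary {A : Ideal R} {n e : ℕ} (h : maximalIdeal R ^ n ≤ A) :
    ∃ k : ℕ, krullDim (Set.Icc (frobPow A (p ^ e)) (⊤ : Ideal R))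
      ≤ ((k : ℕ∞) : WithBot ℕ∞) := by
  have hrad : maximalIdeal R ≤ (frobPow A (p ^ e)).radical := by
    intro y hy
    have h1 : y ^ n ∈ A := h (Ideal.pow_mem_pow hy n)
    have h2 : (y ^ n) ^ p ^ e ∈ frobPow A (p ^ e) := aux_mem_frobPow p h1 e
    exact ⟨n * p ^ e, by rwa [pow_mul]⟩
  obtain ⟨m', hm'⟩ := Ideal.exists_pow_le_of_le_radical_of_fg hrad (IsNoetherian.noetherian _)
  exact aux_primary_dim hm'
end final


theorem length_frobPow_le_filtration_bound
    (R : Type*) [CommRing R] [IsLocalRing R] [IsNoetherianRing R]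
    (p : ℕ) [Fact p.Prime] [CharP R p]
    (I J : Ideal R) (hIJ : I ≤ J) (hI : IsMPrimary I) :
    ∀ e : ℕ,
      len R (R ⧸ frobPow I (p ^ e)) ≤
        len R (↥J ⧸ Submodule.comap J.subtype I) * len R (R ⧸ frobPow (maximalIdeal R) (p ^ e))
          + len R (R ⧸ frobPow J (p ^ e)) := by
  intro e
  open Order in
  obtain ⟨hItop, n, hmn⟩ := hI
  obtain ⟨k1, hk1⟩ := aux_frob_primary (e := e) p (pow_one (maximalIdeal R)).le
  have hceq := aux_len_quot _ hk1
  set c := len R (R ⧸ frobPow (maximalIdeal R) (p ^ e)) with hc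
  obtain ⟨k2, hk2⟩ := aux_frob_primary (e := e) p (hmn.trans hIJ)
  have hbeq := aux_len_quot _ hk2
  set b := len R (R ⧸ frobPow J (p ^ e)) with hb
  obtain ⟨k3, hk3⟩ : ∃ k : ℕ, krullDim (Set.Icc I J) ≤ ((k : ℕ∞) : WithBot ℕ∞) := by
    obtain ⟨k, hk⟩ := aux_primary_dim hmn
    exact ⟨k, le_trans (krullDim_le_of_strictMono
      (fun W : Set.Icc I J => (⟨W.1, W.2.1, le_top⟩ : Set.Icc I ⊤))
      (fun a b hab => Subtype.mk_lt_mk.mpr hab)) hk⟩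
  have hneq := aux_len_sub hIJ hk3
  set N := len R (↥J ⧸ Submodule.comap J.subtype I) with hN
  have hcore := aux_core p e c hceq.le N I J hIJ hneq.le b hbeq.le
  obtain ⟨k4, hk4⟩ := aux_frob_primary (e := e) p hmn
  have hIeq := aux_len_quot _ hk4
  rw [hIeq] at hcore
  exact_mod_cast hcore
end

section
/- Let R be a local Noetherian domain, J an integrally closed m-primary ideal of R, u an element of the socle of J (i.e., (J : u) = m, u ∉ J), and I = (J, u). If M is a finitely generated torsion-free R-module, then λ(IM/JM) ≥ rank(M). -/
open IsLocalRing

/-- `x` is integral over the ideal `J`: it satisfies an equation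
`x^n + a₁ x^{n-1} + ⋯ + aₙ = 0` with `aᵢ ∈ Jⁱ`. -/
def IsIntegralOverIdeal {R : Type*} [CommRing R] (J : Ideal R) (x : R) : Prop :=
  ∃ n : ℕ, 0 < n ∧ ∃ a : ℕ → R, (∀ i, 1 ≤ i → i ≤ n → a i ∈ J ^ i) ∧
    x ^ n + ∑ i ∈ Finset.Icc 1 n, a i * x ^ (n - i) = 0

/-- `J` is integrally closed: every element integral over `J` lies in `J`. -/
def IsIntegrallyClosedIdeal {R : Type*} [CommRing R] (J : Ideal R) : Prop :=
  ∀ x : R, IsIntegralOverIdeal J x → x ∈ J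

/-- The generic rank of a module over a domain: `dim_{Frac R} (M ⊗_R Frac R)`. -/
noncomputable def genericRank (R : Type*) [CommRing R] [IsDomain R]
    (M : Type*) [AddCommGroup M] [Module R M] : ℕ :=
  Module.finrank (FractionRing R) (LocalizedModule (nonZeroDivisors R) M)


section LenLemma

variable (R : Type*) [CommRing R] [IsLocalRing R]
    (Q : Type*) [AddCommGroup Q] [Module R Q] [Module.Finite R Q]

theorem exists_span_card_le_len
    (hQ : ∀ c ∈ maximalIdeal R, ∀ q : Q, c • q = 0) :
    ∃ s : Finset Q, Submodule.span R (s : Set Q) = ⊤ ∧ s.card ≤ len R Q := by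
  classical
  have htor : Module.IsTorsionBySet R Q ((maximalIdeal R : Ideal R) : Set R) :=
    fun x a => hQ a a.2 x
  letI : Module (R ⧸ maximalIdeal R) Q := htor.module
  letI : Field (R ⧸ maximalIdeal R) := Ideal.Quotient.field _
  -- R-spans are contained in (R ⧸ maximalIdeal R)-spans
  have hspan : ∀ (X : Set Q) (x : Q), x ∈ Submodule.span R X → x ∈ Submodule.span (R ⧸ maximalIdeal R) X := by
    intro X x hx
    refine Submodule.span_induction (fun y hy => Submodule.subset_span hy)
      (Submodule.zero_mem _) (fun y z _ _ hy hz => Submodule.add_mem _ hy hz) ?_ hx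
    intro a y _ hy
    have : a • y = (Ideal.Quotient.mk (maximalIdeal R) a) • y := (htor.mk_smul a y).symm
    rw [this]
    exact Submodule.smul_mem _ _ hy
  -- Q is finite dimensional over (R ⧸ maximalIdeal R)
  haveI : Module.Finite (R ⧸ maximalIdeal R) Q := by
    obtain ⟨t, ht⟩ := (Module.finite_def.mp ‹Module.Finite R Q›)
    refine ⟨⟨t, ?_⟩⟩
    rw [eq_top_iff]
    intro q _
    exact hspan _ q (ht ▸ Submodule.mem_top)
  set d := Module.finrank (R ⧸ maximalIdeal R) Q with hd
  have b : Module.Basis (Fin d) (R ⧸ maximalIdeal R) Q := Module.finBasis (R ⧸ maximalIdeal R) Q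
  set s : Finset Q := Finset.image b Finset.univ with hs
  have hcard : s.card = d := by
    rw [hs, Finset.card_image_of_injective _ b.injective, Finset.card_univ, Fintype.card_fin]
  have hscoe : (s : Set Q) = Set.range b := by
    rw [hs, Finset.coe_image, Finset.coe_univ, Set.image_univ]
  -- the (R ⧸ maximalIdeal R)-structure version of R-submodules
  have toK : ∀ N : Submodule R Q, ∃ N' : Submodule (R ⧸ maximalIdeal R) Q, ∀ x : Q, x ∈ N' ↔ x ∈ N := by
    intro N
    refine ⟨⟨⟨⟨(N : Set Q), ?_⟩, ?_⟩, ?_⟩, fun x => Iff.rfl⟩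
    · intro a b ha hb; exact N.add_mem ha hb
    · exact N.zero_mem
    · intro c x hx
      obtain ⟨r, rfl⟩ := Ideal.Quotient.mk_surjective c
      show ((Ideal.Quotient.mk (maximalIdeal R) r) • x) ∈ N
      rw [htor.mk_smul]
      exact N.smul_mem r hx
  -- upper bound for chains
  have hub : ∀ p : LTSeries (Submodule R Q), p.length ≤ d := by
    intro p
    choose f hf using toK
    have hmono : ∀ i : Fin p.length,
        Module.finrank (R ⧸ maximalIdeal R) (f (p i.castSucc)) < Module.finrank (R ⧸ maximalIdeal R) (f (p i.succ)) := by
      intro i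
      apply Submodule.finrank_lt_finrank_of_lt
      have hlt := p.step i
      constructor
      · intro x hx; exact (hf _ x).mpr (hlt.1 ((hf _ x).mp hx))
      · intro hle
        refine hlt.2 fun x hx => ?_
        exact (hf _ x).mp (hle ((hf _ x).mpr hx))
    have key : ∀ n : ℕ, ∀ h : n ≤ p.length, n ≤ Module.finrank (R ⧸ maximalIdeal R) (f (p ⟨n, by omega⟩)) := by
      intro n
      induction n with
      | zero => intro _; exact Nat.zero_le _
      | succ m ih =>
        intro h
        have h1 := ih (by omega)
        have h2 := hmono ⟨m, by omega⟩
        have hc : (⟨m, by omega⟩ : Fin (p.length + 1)) = (⟨m, by omega⟩ : Fin p.length).castSucc := rfl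
        rw [hc] at h1
        have : Module.finrank (R ⧸ maximalIdeal R) (f (p ((⟨m, by omega⟩ : Fin p.length).succ)))
            = Module.finrank (R ⧸ maximalIdeal R) (f (p ⟨m + 1, by omega⟩)) := by congr 1
        omega
    calc p.length ≤ Module.finrank (R ⧸ maximalIdeal R) (f (p ⟨p.length, by omega⟩)) := key _ le_rfl
      _ ≤ d := Submodule.finrank_le _
  -- lower bound: explicit chain
  have hlb : (d : WithBot ℕ∞) ≤ Order.krullDim (Submodule R Q) := by
    let p : LTSeries (Submodule R Q) := {
      length := d
      toFun := fun i => Submodule.span R (b '' {j : Fin d | (j : ℕ) < (i : ℕ)})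
      step := by
        intro i
        constructor
        · apply Submodule.span_mono
          apply Set.image_mono
          intro j hj
          simp only [Set.mem_setOf_eq, Fin.coe_castSucc, Fin.val_succ] at *
          omega
        · intro hle
          have hmem : b ⟨i.1, i.isLt⟩ ∈ Submodule.span R (b '' {j : Fin d | (j : ℕ) < ((i.succ : Fin (d+1)) : ℕ)}) := by
            apply Submodule.subset_span
            exact ⟨⟨i.1, i.isLt⟩, by simp, rfl⟩
          have hnot : b ⟨i.1, i.isLt⟩ ∉ Submodule.span R (b '' {j : Fin d | (j : ℕ) < ((i.castSucc : Fin (d+1)) : ℕ)}) := by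
            intro hmem'
            have := hspan _ _ hmem'
            exact b.linearIndependent.notMem_span_image (by simp) this
          exact hnot (hle hmem) }
    have := Order.LTSeries.length_le_krullDim p
    exact this
  -- combine
  have hub' : Order.krullDim (Submodule R Q) ≤ (d : WithBot ℕ∞) := by
    rw [Order.krullDim_eq_iSup_length]
    rw [show ((d : WithBot ℕ∞)) = (((d : ℕ∞)) : WithBot ℕ∞) by rfl]
    rw [WithBot.coe_le_coe]
    exact iSup_le fun p => Nat.cast_le.mpr (hub p)
  have hkd : Order.krullDim (Submodule R Q) = ((d : ℕ∞) : WithBot ℕ∞) := le_antisymm hub' hlb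
  refine ⟨s, ?_, ?_⟩
  · rw [eq_top_iff]
    intro q _
    have hq : q ∈ Submodule.span (R ⧸ maximalIdeal R) (s : Set Q) := by
      rw [hscoe, b.span_eq]; trivial
    refine Submodule.span_induction (fun y hy => Submodule.subset_span hy)
      (Submodule.zero_mem _) (fun y z _ _ hy hz => Submodule.add_mem _ hy hz) ?_ hq
    intro a y _ hy
    obtain ⟨r, rfl⟩ := Ideal.Quotient.mk_surjective a
    rw [htor.mk_smul]
    exact Submodule.smul_mem _ _ hy
  · rw [len, hkd, WithBot.unbotD_coe, ENat.toNat_coe, hcard]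

end LenLemma

section Ext

variable {R : Type*} [CommRing R] (J : Ideal R) (u : R)

theorem ext_coeffs (N : ℕ) (x : R) (hx : x ∈ J * (J ⊔ Ideal.span {u}) ^ N) :
    ∃ b : ℕ → R, (∀ k, k ≤ N → b k ∈ J ^ (N + 1 - k)) ∧
      x = ∑ k ∈ Finset.range (N + 1), b k * u ^ k := by
  classical
  induction N generalizing x with
  | zero =>
    rw [pow_zero, mul_one] at hx
    exact ⟨fun k => if k = 0 then x else 0, fun k hk => by
      interval_cases k; simpa using hx, by simp⟩
  | succ N ih =>
    have hx' : x ∈ (J ⊔ Ideal.span {u}) * (J * (J ⊔ Ideal.span {u}) ^ N) := by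
      rw [pow_succ] at hx
      convert hx using 1
      ring
    refine Submodule.mul_induction_on hx' ?_ ?_
    · -- a * c with a ∈ J ⊔ (u), c ∈ J * I^N
      intro a ha c hc
      obtain ⟨b, hb, rfl⟩ := ih c hc
      obtain ⟨j, hj, z, hz, rfl⟩ := Submodule.mem_sup.mp ha
      obtain ⟨t, rfl⟩ := Ideal.mem_span_singleton'.mp hz
      refine ⟨fun k => (if k ≤ N then j * b k else 0) + (if 1 ≤ k then t * b (k - 1) else 0),
        ?_, ?_⟩
      · intro k hk
        apply Ideal.add_mem
        · split_ifs with h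
          · have : N + 1 + 1 - k = (N + 1 - k) + 1 := by omega
            rw [this, pow_succ, mul_comm (J ^ (N + 1 - k)) J]
            exact Ideal.mul_mem_mul hj (hb k h)
          · exact Ideal.zero_mem _
        · split_ifs with h
          · have h1 : k - 1 ≤ N := by omega
            have : N + 1 + 1 - k = N + 1 - (k - 1) := by omega
            rw [this]
            exact Ideal.mul_mem_left _ t (hb (k - 1) h1)
          · exact Ideal.zero_mem _
      · have hA : ∑ k ∈ Finset.range (N + 2), (if k ≤ N then j * b k else 0) * u ^ k
            = j * ∑ k ∈ Finset.range (N + 1), b k * u ^ k := by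
          rw [Finset.sum_range_succ, if_neg (by omega), zero_mul, add_zero, Finset.mul_sum]
          apply Finset.sum_congr rfl
          intro k hk
          rw [if_pos (by simpa [Nat.lt_succ_iff] using hk)]
          ring
        have hB : ∑ k ∈ Finset.range (N + 2), (if 1 ≤ k then t * b (k - 1) else 0) * u ^ k
            = t * u * ∑ k ∈ Finset.range (N + 1), b k * u ^ k := by
          rw [Finset.sum_range_succ' (fun k => (if 1 ≤ k then t * b (k - 1) else 0) * u ^ k)]
          rw [if_neg (Nat.not_succ_le_zero 0), zero_mul, add_zero, Finset.mul_sum]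
          apply Finset.sum_congr rfl
          intro k _
          rw [if_pos (Nat.succ_le_succ (Nat.zero_le k)), Nat.add_sub_cancel]
          ring
        have e1 : ∑ k ∈ Finset.range (N + 2), ((if k ≤ N then j * b k else 0)
              + (if 1 ≤ k then t * b (k - 1) else 0)) * u ^ k
            = (∑ k ∈ Finset.range (N + 2), (if k ≤ N then j * b k else 0) * u ^ k)
              + ∑ k ∈ Finset.range (N + 2), (if 1 ≤ k then t * b (k - 1) else 0) * u ^ k := by
          rw [← Finset.sum_add_distrib]
          apply Finset.sum_congr rfl
          intro k _; ring
        rw [e1, hA, hB]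
        ring
    · -- additivity
      rintro y z ⟨by_, hby, rfl⟩ ⟨bz, hbz, rfl⟩
      exact ⟨fun k => by_ k + bz k, fun k hk => Ideal.add_mem _ (hby k hk) (hbz k hk),
        by rw [← Finset.sum_add_distrib]; apply Finset.sum_congr rfl; intro k _; ring⟩

theorem integral_of_pow_mem (N : ℕ) (hu : u ^ (N + 1) ∈ J * (J ⊔ Ideal.span {u}) ^ N) :
    IsIntegralOverIdeal J u := by
  obtain ⟨b, hb, heq⟩ := ext_coeffs J u N _ hu
  refine ⟨N + 1, Nat.succ_pos _, fun i => -b (N + 1 - i), fun i h1 hn => ?_, ?_⟩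
  · have : b (N + 1 - i) ∈ J ^ (N + 1 - (N + 1 - i)) := hb _ (by omega)
    have he : N + 1 - (N + 1 - i) = i := by omega
    rw [he] at this
    exact Submodule.neg_mem _ this
  · have hre : ∑ i ∈ Finset.Icc 1 (N + 1), -b (N + 1 - i) * u ^ (N + 1 - i)
        = -∑ k ∈ Finset.range (N + 1), b k * u ^ k := by
      rw [← Finset.sum_neg_distrib]
      apply Finset.sum_nbij' (fun i => N + 1 - i) (fun k => N + 1 - k)
      · intro a ha; simp only [Finset.mem_Icc] at ha; simp only [Finset.mem_range]; omega
      · intro a ha; simp only [Finset.mem_range] at ha; simp only [Finset.mem_Icc]; omega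
      · intro a ha; simp only [Finset.mem_Icc] at ha; omega
      · intro a ha; simp only [Finset.mem_range] at ha; omega
      · intro a ha; simp only [Finset.mem_Icc] at ha; ring
    rw [hre, ← heq]
    ring

end Ext

theorem core3 {R : Type*} [CommRing R] [IsDomain R]
    {J : Ideal R} {u : R} {I : Ideal R} (hI : I = J ⊔ Ideal.span {u}) (hu0 : u ≠ 0)
    {M : Type*} [AddCommGroup M] [Module R M] [Module.Finite R M]
    {T : Type*} [CommRing T] [IsLocalRing T]
    (ρ : R →+* T) (φ : T →+* FractionRing R)
    (hφρ : ∀ r : R, φ (ρ r) = algebraMap R (FractionRing R) r)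
    (hJT : ∀ j ∈ J, ∃ a ∈ maximalIdeal T,
      algebraMap R (FractionRing R) j = φ a * algebraMap R (FractionRing R) u)
    {V : Type*} [AddCommGroup V] [Module (FractionRing R) V] [Module R V]
    [IsScalarTower R (FractionRing R) V]
    (ι : M →ₗ[R] V) (hV : Submodule.span (FractionRing R) (Set.range ι) = ⊤)
    (s : Finset M)
    (hsI : ∀ w ∈ s, w ∈ I • (⊤ : Submodule R M))
    (hs : ∀ x : M, u • x ∈ (J • (⊤ : Submodule R M)) ⊔ Submodule.span R (s : Set M)) :
    Module.finrank (FractionRing R) V ≤ s.card := by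
  classical
  letI : Module T V := Module.compHom V φ
  have hT : ∀ (t : T) (v : V), t • v = φ t • v := fun _ _ => rfl
  have hR : ∀ (r : R) (v : V), r • v = algebraMap R (FractionRing R) r • v :=
    fun r v => (algebraMap_smul _ r v).symm
  have hρ : ∀ (r : R) (v : V), ρ r • v = r • v := by
    intro r v; rw [hT, hφρ, ← hR]
  set uK : FractionRing R := algebraMap R (FractionRing R) u with huK
  have hfu : uK ≠ 0 := fun h => hu0 ((IsFractionRing.to_map_eq_zero_iff (K := FractionRing R)).mp h)
  set MT : Submodule T V := Submodule.span T (Set.range ι) with hMT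
  have hspanRT : ∀ (X : Set V) (v : V), v ∈ Submodule.span R X → v ∈ Submodule.span T X := by
    intro X v hv
    refine Submodule.span_induction (fun y hy => Submodule.subset_span hy)
      (Submodule.zero_mem _) (fun y z _ _ hy hz => Submodule.add_mem _ hy hz) ?_ hv
    intro r y _ hy
    rw [← hρ]
    exact Submodule.smul_mem _ _ hy
  have hiota : ∀ x : M, ι x ∈ MT := fun x => Submodule.subset_span ⟨x, rfl⟩
  have hMTfg : MT.FG := by
    obtain ⟨t, ht⟩ := Module.finite_def.mp ‹Module.Finite R M›
    refine ⟨Finset.image ι t, le_antisymm ?_ ?_⟩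
    · apply Submodule.span_le.mpr
      rintro v hv
      rw [Finset.coe_image] at hv
      obtain ⟨x, _, rfl⟩ := hv
      exact hiota x
    · rw [hMT]
      apply Submodule.span_le.mpr
      rintro v ⟨x, rfl⟩
      have hx : ι x ∈ Submodule.span R (ι '' (t : Set M)) := by
        rw [Submodule.span_image]
        exact Submodule.mem_map_of_mem (by rw [ht]; trivial)
      have := hspanRT _ _ hx
      rwa [Finset.coe_image]
  have hkey : ∀ j ∈ J, ∀ v ∈ MT, uK⁻¹ • (j • v) ∈ (maximalIdeal T) • MT := by
    intro j hj v hv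
    obtain ⟨a, ha, hae⟩ := hJT j hj
    have he : uK⁻¹ • (j • v) = a • v := by
      rw [hT, hR j v, smul_smul]
      congr 1
      rw [hae]
      field_simp
    rw [he]
    exact Submodule.smul_mem_smul ha hv
  have hkeyJ : ∀ y ∈ (J • (⊤ : Submodule R M)), uK⁻¹ • ι y ∈ (maximalIdeal T) • MT := by
    intro y hy
    refine Submodule.smul_induction_on hy ?_ ?_
    · intro j hj m _
      rw [map_smul]
      exact hkey j hj (ι m) (hiota m)
    · intro y z hy hz
      rw [map_add, smul_add]
      exact Submodule.add_mem _ hy hz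
  have hkeyI : ∀ w ∈ (I • (⊤ : Submodule R M)), uK⁻¹ • ι w ∈ MT := by
    intro w hw
    refine Submodule.smul_induction_on hw ?_ ?_
    · intro i hi m _
      rw [hI] at hi
      obtain ⟨j, hj, z, hz, rfl⟩ := Submodule.mem_sup.mp hi
      obtain ⟨t, rfl⟩ := Ideal.mem_span_singleton'.mp hz
      rw [add_smul, map_add, smul_add]
      refine Submodule.add_mem _ ?_ ?_
      · rw [map_smul]
        exact Submodule.smul_le_right (hkey j hj (ι m) (hiota m))
      · have he : uK⁻¹ • ((t * u) • ι m) = t • ι m := by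
          rw [hR (t * u), hR t, smul_smul, map_mul]
          congr 1
          field_simp
          rw [huK]; ring
        rw [map_smul, he, ← hρ]
        exact Submodule.smul_mem _ _ (hiota m)
    · intro y z hy hz
      rw [map_add, smul_add]
      exact Submodule.add_mem _ hy hz
  set W : Submodule T V := Submodule.span T ((fun w => uK⁻¹ • ι w) '' (s : Set M)) with hW
  have hWMT : W ≤ MT := Submodule.span_le.mpr (by
    rintro v ⟨w, hw, rfl⟩
    exact hkeyI w (hsI w hw))
  have hMTle : MT ≤ W ⊔ (maximalIdeal T) • MT := by
    rw [hMT]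
    apply Submodule.span_le.mpr
    rintro v ⟨x, rfl⟩
    obtain ⟨y, hy, z, hz, hyz⟩ := Submodule.mem_sup.mp (hs x)
    have hx : ι x = uK⁻¹ • ι y + uK⁻¹ • ι z := by
      have h1 : uK • ι x = ι y + ι z := by
        rw [← map_add, ← hR u (ι x), ← map_smul, hyz]
      rw [← smul_add, ← h1, inv_smul_smul₀ hfu]
    rw [hx]
    refine Submodule.add_mem _ (Submodule.mem_sup_right (hkeyJ y hy)) ?_
    · refine Submodule.mem_sup_left ?_
      have hz' : ∀ z', z' ∈ Submodule.span R (s : Set M) → uK⁻¹ • ι z' ∈ W := by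
        intro z' hz'
        refine Submodule.span_induction ?_ ?_ ?_ ?_ hz'
        · intro w hw
          exact Submodule.subset_span ⟨w, hw, rfl⟩
        · rw [map_zero, smul_zero]; exact Submodule.zero_mem _
        · intro a b _ _ ha hb
          rw [map_add, smul_add]; exact Submodule.add_mem _ ha hb
        · intro r a _ ha
          have he : uK⁻¹ • ι (r • a) = r • (uK⁻¹ • ι a) := by
            rw [map_smul, hR r (ι a), hR r, smul_smul, smul_smul, mul_comm]
          rw [he, ← hρ]
          exact Submodule.smul_mem _ _ ha
      exact hz' z hz
  have hNak : MT ≤ W :=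
    Submodule.le_of_le_smul_of_le_jacobson_bot hMTfg
      (le_of_eq (IsLocalRing.jacobson_eq_maximalIdeal ⊥ bot_ne_top).symm) hMTle
  -- conclude
  have hTK : ∀ (X : Set V) (v : V), v ∈ Submodule.span T X →
      v ∈ Submodule.span (FractionRing R) X := by
    intro X v hv
    refine Submodule.span_induction (fun y hy => Submodule.subset_span hy)
      (Submodule.zero_mem _) (fun y z _ _ hy hz => Submodule.add_mem _ hy hz) ?_ hv
    intro t y _ hy
    rw [hT]
    exact Submodule.smul_mem _ _ hy
  have hfinal : Submodule.span (FractionRing R) ((fun w => uK⁻¹ • ι w) '' (s : Set M)) = ⊤ := by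
    rw [eq_top_iff, ← hV]
    apply Submodule.span_le.mpr
    rintro v ⟨x, rfl⟩
    exact hTK _ _ (hNak (hiota x))
  have hcard : Module.finrank (FractionRing R) V
      ≤ (s.image (fun w => uK⁻¹ • ι w)).card := by
    have hco : ((s.image (fun w => uK⁻¹ • ι w) : Finset V) : Set V)
        = (fun w => uK⁻¹ • ι w) '' (s : Set M) := Finset.coe_image
    have h1 := finrank_span_finset_le_card (R := FractionRing R) (s.image (fun w => uK⁻¹ • ι w))
    rw [Set.finrank, hco, hfinal, finrank_top] at h1
    exact h1
  exact le_trans hcard (Finset.card_image_le)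

set_option maxHeartbeats 1000000 in
set_option synthInstance.maxHeartbeats 400000 in
theorem main_core (R : Type*) [CommRing R] [IsLocalRing R] [IsDomain R]
    (J : Ideal R) (hJic : IsIntegrallyClosedIdeal J)
    (u : R) (hu0 : u ≠ 0) (huJ : u ∉ J)
    (I : Ideal R) (hI : I = J ⊔ Ideal.span {u})
    (M : Type*) [AddCommGroup M] [Module R M] [Module.Finite R M]
    (s : Finset M)
    (hsI : ∀ w ∈ s, w ∈ I • (⊤ : Submodule R M))
    (hs : ∀ x : M, u • x ∈ (J • (⊤ : Submodule R M)) ⊔ Submodule.span R (s : Set M)) :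
    genericRank R M ≤ s.card := by
  classical
  have hf : Function.Injective (algebraMap R (FractionRing R)) := IsFractionRing.injective R _
  have hfu : algebraMap R (FractionRing R) u ≠ 0 := fun h =>
    hu0 ((IsFractionRing.to_map_eq_zero_iff (K := FractionRing R)).mp h)
  have huI : u ∈ I := by
    rw [hI]; exact Submodule.mem_sup_right (Ideal.subset_span rfl)
  set Sgens : Set (FractionRing R) :=
    (fun j => algebraMap R (FractionRing R) j * (algebraMap R (FractionRing R) u)⁻¹) '' (J : Set R)
    with hSgens
  -- every element of the adjoin satisfies u^N s ∈ I^N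
  have B0 : ∀ t : FractionRing R, t ∈ Algebra.adjoin R Sgens →
      ∃ N : ℕ, ∃ r : R, r ∈ I ^ N ∧ algebraMap R (FractionRing R) r
        = (algebraMap R (FractionRing R) u) ^ N * t := by
    intro t ht
    refine Algebra.adjoin_induction ?_ ?_ ?_ ?_ ht
    · rintro x ⟨j, hj, rfl⟩
      refine ⟨1, j, by simpa [pow_one] using (hI ▸ Submodule.mem_sup_left hj : j ∈ I), ?_⟩
      rw [pow_one]
      field_simp
    · intro r
      exact ⟨0, r, by rw [pow_zero, Ideal.one_eq_top]; trivial, by rw [pow_zero, one_mul]⟩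
    · rintro x y _ _ ⟨Nx, rx, hrx, hex⟩ ⟨Ny, ry, hry, hey⟩
      refine ⟨Nx + Ny, u ^ Ny * rx + u ^ Nx * ry, ?_, ?_⟩
      · refine Ideal.add_mem _ ?_ ?_
        · have h1 := Ideal.mul_mem_mul (Ideal.pow_mem_pow huI Ny) hrx
          have h2 : I ^ Ny * I ^ Nx = I ^ (Nx + Ny) := by rw [← pow_add, add_comm]
          rwa [h2] at h1
        · have h1 := Ideal.mul_mem_mul (Ideal.pow_mem_pow huI Nx) hry
          have h2 : I ^ Nx * I ^ Ny = I ^ (Nx + Ny) := by rw [← pow_add]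
          rwa [h2] at h1
      · rw [map_add, map_mul, map_mul, map_pow, map_pow, hex, hey]
        ring
    · rintro x y _ _ ⟨Nx, rx, hrx, hex⟩ ⟨Ny, ry, hry, hey⟩
      refine ⟨Nx + Ny, rx * ry, by rw [pow_add]; exact Ideal.mul_mem_mul hrx hry, ?_⟩
      rw [map_mul, hex, hey]
      ring
  set A : Ideal ↥(Algebra.adjoin R Sgens) :=
    Ideal.span {a : ↥(Algebra.adjoin R Sgens) | (a : FractionRing R) ∈ Sgens} with hA
  have hAne : A ≠ ⊤ := by
    intro htop
    have h1 : (1 : ↥(Algebra.adjoin R Sgens)) ∈ A := htop ▸ Submodule.mem_top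
    have key : ∀ a : ↥(Algebra.adjoin R Sgens), a ∈ A → ∃ N : ℕ, ∃ r : R,
        r ∈ J * I ^ N ∧ algebraMap R (FractionRing R) r
          = (algebraMap R (FractionRing R) u) ^ (N + 1) * (a : FractionRing R) := by
      intro a ha
      refine Submodule.span_induction ?_ ?_ ?_ ?_ ha
      · rintro x hx
        obtain ⟨j, hj, hxe⟩ := hx
        refine ⟨0, j, by rw [pow_zero, mul_one]; exact hj, ?_⟩
        rw [← hxe, pow_one]
        field_simp
      · exact ⟨0, 0, Submodule.zero_mem _, by simp⟩
      · rintro x y _ _ ⟨Nx, rx, hrx, hex⟩ ⟨Ny, ry, hry, hey⟩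
        refine ⟨Nx + Ny, u ^ Ny * rx + u ^ Nx * ry, ?_, ?_⟩
        · refine Ideal.add_mem _ ?_ ?_
          · have h1 := Ideal.mul_mem_mul (Ideal.pow_mem_pow huI Ny) hrx
            have h2 : I ^ Ny * (J * I ^ Nx) = J * I ^ (Nx + Ny) := by
              rw [pow_add]; ring
            rwa [h2] at h1
          · have h1 := Ideal.mul_mem_mul (Ideal.pow_mem_pow huI Nx) hry
            have h2 : I ^ Nx * (J * I ^ Ny) = J * I ^ (Nx + Ny) := by
              rw [pow_add]; ring
            rwa [h2] at h1
        · rw [map_add, map_mul, map_mul, map_pow, map_pow, hex, hey]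
          push_cast
          ring
      · rintro t x _ ⟨Nx, rx, hrx, hex⟩
        obtain ⟨Nt, rt, hrt, het⟩ := B0 (t : FractionRing R) t.2
        refine ⟨Nt + Nx, rt * rx, ?_, ?_⟩
        · have h1 := Ideal.mul_mem_mul hrt hrx
          have h2 : I ^ Nt * (J * I ^ Nx) = J * I ^ (Nt + Nx) := by
            rw [pow_add]; ring
          rwa [h2] at h1
        · rw [map_mul, hex, het, smul_eq_mul]
          push_cast
          ring
    obtain ⟨N, r, hrm, hre⟩ := key 1 h1
    have hr : r = u ^ (N + 1) := by
      apply hf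
      rw [hre, map_pow]
      push_cast
      ring
    rw [hr, hI] at hrm
    exact huJ (hJic u (integral_of_pow_mem J u N hrm))
  obtain ⟨n, hnmax, hAn⟩ := Ideal.exists_le_maximal A hAne
  haveI := hnmax
  have hunit : ∀ y : n.primeCompl,
      IsUnit (algebraMap ↥(Algebra.adjoin R Sgens) (FractionRing R) y) := by
    rintro ⟨y, hy⟩
    rw [isUnit_iff_ne_zero]
    intro h0
    have : y = 0 := by
      apply Subtype.ext
      simpa using h0
    exact hy (this ▸ n.zero_mem)
  set φ : Localization.AtPrime n →+* FractionRing R := IsLocalization.lift hunit with hφ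
  set ρ : R →+* Localization.AtPrime n :=
    (algebraMap ↥(Algebra.adjoin R Sgens) (Localization.AtPrime n)).comp
      (algebraMap R ↥(Algebra.adjoin R Sgens)) with hρdef
  have hφρ : ∀ r : R, φ (ρ r) = algebraMap R (FractionRing R) r := by
    intro r
    rw [hρdef, RingHom.comp_apply, hφ, IsLocalization.lift_eq]
    exact (IsScalarTower.algebraMap_apply R ↥(Algebra.adjoin R Sgens) (FractionRing R) r).symm
  have hJT : ∀ j ∈ J, ∃ a ∈ maximalIdeal (Localization.AtPrime n),
      algebraMap R (FractionRing R) j = φ a * algebraMap R (FractionRing R) u := by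
    intro j hj
    have hmem : (algebraMap R (FractionRing R) j * (algebraMap R (FractionRing R) u)⁻¹)
        ∈ Algebra.adjoin R Sgens := Algebra.subset_adjoin ⟨j, hj, rfl⟩
    set b : ↥(Algebra.adjoin R Sgens) :=
      ⟨algebraMap R (FractionRing R) j * (algebraMap R (FractionRing R) u)⁻¹, hmem⟩ with hb
    refine ⟨algebraMap _ (Localization.AtPrime n) b, ?_, ?_⟩
    · rw [IsLocalRing.mem_maximalIdeal, mem_nonunits_iff]
      intro hun
      have hbn : b ∈ n := hAn (Ideal.subset_span (by exact ⟨j, hj, rfl⟩))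
      have := (IsLocalization.AtPrime.isUnit_to_map_iff (Localization.AtPrime n) n b).mp hun
      exact this hbn
    · rw [hφ, IsLocalization.lift_eq]
      show algebraMap R (FractionRing R) j
        = (algebraMap ↥(Algebra.adjoin R Sgens) (FractionRing R) b) * _
      rw [hb]
      show algebraMap R (FractionRing R) j
        = (algebraMap R (FractionRing R) j * (algebraMap R (FractionRing R) u)⁻¹) * _
      field_simp
  have hV : Submodule.span (FractionRing R)
      (Set.range (LocalizedModule.mkLinearMap (nonZeroDivisors R) M)) = ⊤ := by
    rw [eq_top_iff]
    rintro v -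
    induction v using LocalizedModule.induction_on with
    | _ m σ =>
      have he : (LocalizedModule.mk m σ : LocalizedModule (nonZeroDivisors R) M)
          = (Localization.mk 1 σ : Localization (nonZeroDivisors R))
            • (LocalizedModule.mk m 1) := by
        rw [LocalizedModule.mk_smul_mk, one_smul, mul_one]
      rw [he]
      refine Submodule.smul_mem _ _ (Submodule.subset_span ⟨m, rfl⟩)
  exact core3 (T := Localization.AtPrime n) hI hu0 ρ φ hφρ hJT (LocalizedModule.mkLinearMap (nonZeroDivisors R) M) hV s hsI hs

theorem rank_le_length_smul_quotient
    (R : Type*) [CommRing R] [IsLocalRing R] [IsNoetherianRing R] [IsDomain R]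
    (J : Ideal R) (hJprim : IsMPrimary J) (hJic : IsIntegrallyClosedIdeal J)
    (u : R) (huJ : u ∉ J) (husoc : Submodule.colon J (Ideal.span {u}) = maximalIdeal R)
    (I : Ideal R) (hI : I = J ⊔ Ideal.span {u})
    (M : Type*) [AddCommGroup M] [Module R M] [Module.Finite R M]
    [NoZeroSMulDivisors R M] :
    genericRank R M ≤
      len R (↥(I • (⊤ : Submodule R M)) ⧸
        Submodule.comap (I • (⊤ : Submodule R M)).subtype (J • (⊤ : Submodule R M))) := by
  classical
  have hu0 : u ≠ 0 := by
    rintro rfl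
    have h1 : Submodule.colon J (Ideal.span {(0 : R)}) = ⊤ := by
      rw [eq_top_iff]
      intro r _
      rw [Submodule.mem_colon]
      intro p hp
      rw [Ideal.span_singleton_eq_bot.mpr rfl] at hp
      rw [(Submodule.mem_bot R).mp hp, smul_zero]
      exact J.zero_mem
    rw [h1] at husoc
    exact (IsLocalRing.maximalIdeal.isMaximal R).ne_top husoc.symm
  have hmu : ∀ c ∈ maximalIdeal R, c * u ∈ J := by
    intro c hc
    rw [← husoc] at hc
    have := Submodule.mem_colon.mp hc u (Ideal.subset_span rfl)
    rwa [smul_eq_mul] at this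
  have huI : u ∈ I := by
    rw [hI]; exact Submodule.mem_sup_right (Ideal.subset_span rfl)
  set P : Submodule R M := I • (⊤ : Submodule R M) with hP
  set P' : Submodule R ↥P := Submodule.comap P.subtype (J • (⊤ : Submodule R M)) with hP'
  haveI : Module.Finite R ↥P := ⟨(Submodule.fg_top P).mpr (IsNoetherian.noetherian P)⟩
  haveI : Module.Finite R (↥P ⧸ P') := inferInstance
  -- the quotient is killed by the maximal ideal
  have haux : ∀ c ∈ maximalIdeal R, ∀ x ∈ P, c • x ∈ J • (⊤ : Submodule R M) := by
    intro c hc x hx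
    refine Submodule.smul_induction_on hx ?_ ?_
    · intro i hi m _
      rw [smul_smul]
      have hci : c * i ∈ J := by
        rw [hI] at hi
        obtain ⟨j, hj, z, hz, rfl⟩ := Submodule.mem_sup.mp hi
        obtain ⟨t, rfl⟩ := Ideal.mem_span_singleton'.mp hz
        have h1 : c * j ∈ J := Ideal.mul_mem_left _ c hj
        have h2 : c * (t * u) ∈ J := by
          have h3 := Ideal.mul_mem_left _ t (hmu c hc)
          rwa [show t * (c * u) = c * (t * u) by ring] at h3
        have h4 := Ideal.add_mem _ h1 h2
        rwa [← mul_add] at h4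
      exact Submodule.smul_mem_smul hci Submodule.mem_top
    · intro x y hx hy
      rw [smul_add]
      exact Submodule.add_mem _ hx hy
  have hQkill : ∀ c ∈ maximalIdeal R, ∀ q : (↥P ⧸ P'), c • q = 0 := by
    intro c hc q
    obtain ⟨v, rfl⟩ := Submodule.Quotient.mk_surjective P' q
    rw [← Submodule.Quotient.mk_smul, Submodule.Quotient.mk_eq_zero]
    rw [hP', Submodule.mem_comap]
    show ((c • v : ↥P) : M) ∈ J • (⊤ : Submodule R M)
    rw [Submodule.coe_smul]
    exact haux c hc (v : M) v.2
  obtain ⟨sQ, hsQ, hcard⟩ := exists_span_card_le_len R (↥P ⧸ P') hQkill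
  have hFex : ∀ q : (↥P ⧸ P'), ∃ v : ↥P, Submodule.Quotient.mk v = q :=
    Submodule.Quotient.mk_surjective P'
  choose F hF using hFex
  set s0 : Finset ↥P := sQ.image F with hs0
  set s : Finset M := s0.image Subtype.val with hsdef
  have hsI : ∀ w ∈ s, w ∈ I • (⊤ : Submodule R M) := by
    intro w hw
    rw [hsdef, Finset.mem_image] at hw
    obtain ⟨v, _, rfl⟩ := hw
    exact v.2
  have hs : ∀ x : M, u • x ∈ (J • (⊤ : Submodule R M)) ⊔ Submodule.span R (s : Set M) := by
    intro x
    have hux : u • x ∈ P := Submodule.smul_mem_smul huI Submodule.mem_top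
    set v : ↥P := ⟨u • x, hux⟩ with hv
    have h1 : (⊤ : Submodule R (↥P ⧸ P')) ≤
        Submodule.map P'.mkQ (Submodule.span R (s0 : Set ↥P)) := by
      rw [← hsQ, ← Submodule.span_image]
      apply Submodule.span_mono
      intro q hq
      refine ⟨F q, ?_, ?_⟩
      · rw [hs0, Finset.coe_image]
        exact Set.mem_image_of_mem F hq
      · rw [Submodule.mkQ_apply]
        exact hF q
    obtain ⟨w, hw, hwv⟩ := h1 (Submodule.mem_top : P'.mkQ v ∈ ⊤)
    rw [Submodule.mkQ_apply, Submodule.mkQ_apply] at hwv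
    have hsub : w - v ∈ P' := (Submodule.Quotient.eq P').mp hwv
    have hwM : (w : M) ∈ Submodule.span R (s : Set M) := by
      have h2 : (w : M) ∈ Submodule.map P.subtype (Submodule.span R (s0 : Set ↥P)) :=
        ⟨w, hw, rfl⟩
      rw [← Submodule.span_image] at h2
      have h3 : (P.subtype '' (s0 : Set ↥P)) = (s : Set M) := by
        rw [hsdef, Finset.coe_image, Submodule.coe_subtype, hs0, Finset.coe_image, Finset.coe_image]
      rwa [h3] at h2
    have hsubM : ((w - v : ↥P) : M) ∈ J • (⊤ : Submodule R M) := by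
      rw [hP', Submodule.mem_comap] at hsub
      exact hsub
    refine Submodule.mem_sup.mpr ⟨-((w - v : ↥P) : M), Submodule.neg_mem _ hsubM,
      (w : M), hwM, ?_⟩
    have : ((w - v : ↥P) : M) = (w : M) - (u • x) := by
      rw [Submodule.coe_sub]
    rw [this]
    abel
  calc genericRank R M ≤ s.card :=
        main_core R J hJic u hu0 huJ I hI M s hsI hs
    _ ≤ s0.card := Finset.card_image_le
    _ ≤ sQ.card := Finset.card_image_le
    _ ≤ _ := hcard
end
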